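/- Let A be an associative algebra (not necessarily unital) over a field k and M a right A-module. Let M_r° = { f ∈ M* : f vanishes on some A-submodule of M of finite codimension } and A° = { f ∈ A* : f vanishes on some right ideal of A of finite codimension }. Then for every f ∈ M_r° there exist finitely many f_i ∈ M_r° and g_i ∈ A° with f(xa) = Σ f_i(x)g_i(a) for all x ∈ M, a ∈ A; thus the dual ρ_r of the action map restricts to ρ_r : M_r° → M_r°⊗A°, and (M_r°, ρ_r) is a right comodule over the coalgebra (A°, m*), i.e. (id⊗m*)ρ_r = (ρ_r⊗id)ρ_r on M_r°. -/

import Mathlib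

section

variable {k : Type} [Field k]

/-- The finite dual `A°` of a (not necessarily unital) algebra `A`. -/
def finDual (k : Type) [Field k] (A : Type) [NonUnitalRing A] [Module k A]
    [SMulCommClass k A A] [IsScalarTower k A A] : Set (Module.Dual k A) :=
  {f | ∃ R : Submodule k A, (∀ x ∈ R, ∀ a : A, x * a ∈ R) ∧
        FiniteDimensional k (A ⧸ R) ∧ ∀ x ∈ R, f x = 0}

/-- The finite dual `M_r°` of a right `A`-module `M` with action `μ`. -/
def finDualModR {A M : Type} [NonUnitalRing A] [Module k A]
    [SMulCommClass k A A] [IsScalarTower k A A] [AddCommGroup M] [Module k M]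
    (μ : M →ₗ[k] A →ₗ[k] M) : Set (Module.Dual k M) :=
  {f | ∃ N : Submodule k M, (∀ x ∈ N, ∀ a : A, μ x a ∈ N) ∧
        FiniteDimensional k (M ⧸ N) ∧ ∀ x ∈ N, f x = 0}

/-- **Proposition 3.5.** For every `f ∈ M_r°` there are finitely many `f_i ∈ M_r°` and
`g_i ∈ A°` with `f(xa) = Σ f_i(x) g_i(a)` (i.e. `ρ_r(M_r°) ⊆ M_r° ⊗ A°`); moreover
`(M_r°, ρ_r)` is a right `A°`-comodule: `(id ⊗ m*) ρ_r = (ρ_r ⊗ id) ρ_r`. -/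
theorem finDualModR_comodule {A M : Type} [NonUnitalRing A] [Module k A]
    [SMulCommClass k A A] [IsScalarTower k A A] [AddCommGroup M] [Module k M]
    (μ : M →ₗ[k] A →ₗ[k] M)
    (hμ : ∀ (x : M) (a b : A), μ (μ x a) b = μ x (a * b))
    (f : Module.Dual k M) (hf : f ∈ finDualModR μ) :
    (∃ (n : ℕ) (g : Fin n → Module.Dual k M) (h : Fin n → Module.Dual k A),
      (∀ i, g i ∈ finDualModR μ ∧ h i ∈ finDual k A) ∧
      ∀ (x : M) (a : A), f (μ x a) = ∑ i, g i x * h i a) ∧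
    ∀ (x : M) (a b : A), f (μ x (a * b)) = f (μ (μ x a) b) := by
  obtain ⟨N, hN1, hN2, hN3⟩ := hf
  refine ⟨?_, fun x a b => by rw [hμ]⟩
  haveI := hN2
  set n := Module.finrank k (M ⧸ N) with hn
  let b : Module.Basis (Fin n) k (M ⧸ N) := Module.finBasis k (M ⧸ N)
  choose m hm using fun j : Fin n => Submodule.Quotient.mk_surjective N (b j)
  refine ⟨n, fun j => (b.coord j).comp N.mkQ, fun j => f ∘ₗ μ (m j), fun j => ⟨?_, ?_⟩, ?_⟩
  · refine ⟨N, hN1, hN2, fun x hx => ?_⟩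
    have : N.mkQ x = 0 := (Submodule.Quotient.mk_eq_zero N).mpr hx
    simp [this]
  · -- h j ∈ finDual k A
    set ψ : A →ₗ[k] (Fin n → M ⧸ N) := LinearMap.pi fun i => N.mkQ ∘ₗ μ (m i) with hψ
    have hker : ∀ c : A, c ∈ LinearMap.ker ψ ↔ ∀ i, μ (m i) c ∈ N := by
      intro c
      simp only [LinearMap.mem_ker, hψ, funext_iff, LinearMap.pi_apply,
        LinearMap.comp_apply, Submodule.mkQ_apply, Pi.zero_apply, Submodule.Quotient.mk_eq_zero]
    refine ⟨LinearMap.ker ψ, ?_, ?_, ?_⟩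
    · intro c hc a
      rw [hker] at hc ⊢
      intro i
      have := hμ (m i) c a
      rw [← this]
      exact hN1 _ (hc i) a
    · haveI : FiniteDimensional k (LinearMap.range ψ) := inferInstance
      exact ψ.quotKerEquivRange.symm.finiteDimensional
    · intro c hc
      rw [hker] at hc
      exact hN3 _ (hc j)
  · intro x a
    set s : M := ∑ j, b.repr (N.mkQ x) j • m j with hs
    have hxs : x - s ∈ N := by
      rw [← Submodule.Quotient.mk_eq_zero, ← Submodule.mkQ_apply, map_sub, hs, map_sum]
      simp only [map_smul, Submodule.mkQ_apply, hm]
      rw [b.sum_repr (Submodule.Quotient.mk x : M ⧸ N), sub_self]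
    have hx : x = (x - s) + s := by abel
    calc f (μ x a) = f (μ ((x - s) + s) a) := by rw [← hx]
      _ = f (μ (x - s) a) + f (μ s a) := by simp [map_add]
      _ = f (μ s a) := by rw [hN3 _ (hN1 _ hxs a), zero_add]
      _ = ∑ j, ((b.coord j).comp N.mkQ) x * (f ∘ₗ μ (m j)) a := by
          simp [hs, map_sum, LinearMap.sum_apply, LinearMap.smul_apply, map_smul,
            smul_eq_mul, Module.Basis.coord_apply]

end
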